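/- arXiv:1607.03526 — 3 statements merged into one kernel-verified Lean document; each statement's English description precedes it below -/
import Mathlib

section
/- Let u be a second-order process with covariance function c. If c is twice continuously differentiable on ℝ^d × ℝ^d, then for every x ∈ ℝ^d and every coordinate direction r ∈ {1,…,d}, the mean-square partial derivative ∂_r u(x) exists, i.e. the difference quotients (u(x + h e_r) − u(x))/h converge in L²(μ)-norm as h → 0. -/
open MeasureTheory Filter

private lemma abs_le_abs_of_uIoc {k t : ℝ} (ht : t ∈ Set.uIoc 0 k) : |t| ≤ |k| := by
  rcases Set.mem_uIoc.1 ht with ⟨h1, h2⟩ | ⟨h1, h2⟩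
  · rw [abs_of_pos h1, abs_of_pos (by linarith)]; linarith
  · rw [abs_of_nonpos h2, abs_of_neg (by linarith : k < 0)]; linarith

/-- If the covariance function `c` of a second-order (mean-zero, `L²`)
process `u` is twice continuously differentiable on `ℝ^d × ℝ^d`, then for every point `x`
and every coordinate direction `r`, the mean-square partial derivative `∂_r u(x)` exists,
i.e. the difference quotients `(u(x + h e_r) − u(x))/h` converge in `L²(μ)` as `h → 0`. -/
theorem meanSquare_partialDeriv_exists
    {Ω : Type*} [MeasurableSpace Ω] {μ : Measure Ω} [IsProbabilityMeasure μ]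
    {d : ℕ}
    (u : (Fin d → ℝ) → Lp ℝ 2 μ)
    (hmean : ∀ x : Fin d → ℝ, ∫ ω, (u x : Ω → ℝ) ω ∂μ = 0)
    (c : (Fin d → ℝ) → (Fin d → ℝ) → ℝ)
    (hc : ∀ x x' : Fin d → ℝ, c x x' = ∫ ω, (u x : Ω → ℝ) ω * (u x' : Ω → ℝ) ω ∂μ)
    (hC2 : ContDiff ℝ 2 (Function.uncurry c))
    (x : Fin d → ℝ) (r : Fin d) :
    ∃ D : Lp ℝ 2 μ,
      Tendsto (fun h : ℝ => h⁻¹ • (u (x + h • (Pi.single r 1 : Fin d → ℝ)) - u x))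
        (nhdsWithin 0 {0}ᶜ) (nhds D) := by
  classical
  set e : Fin d → ℝ := (Pi.single r 1 : Fin d → ℝ) with he
  -- the covariance equals the L² inner product
  have cEq : ∀ y z : Fin d → ℝ, (inner ℝ (u y) (u z) : ℝ) = c y z := by
    intro y z
    rw [hc, MeasureTheory.L2.inner_def]
    simp [RCLike.inner_apply, mul_comm]
  -- the two-variable restriction of c along the line
  set F : ℝ × ℝ → ℝ := fun p => c (x + p.1 • e) (x + p.2 • e) with hFdef
  have hA : ContDiff ℝ 2 (fun p : ℝ × ℝ => ((x + p.1 • e, x + p.2 • e) :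
      (Fin d → ℝ) × (Fin d → ℝ))) := by
    apply ContDiff.prodMk
    · exact contDiff_const.add (contDiff_fst.smul contDiff_const)
    · exact contDiff_const.add (contDiff_snd.smul contDiff_const)
  have hF : ContDiff ℝ 2 F := hC2.comp hA
  -- first partial in the second variable
  set P : ℝ × ℝ → ℝ := fun p => fderiv ℝ F p ((0:ℝ), (1:ℝ)) with hPdef
  have hP : ContDiff ℝ 1 P :=
    (ContinuousLinearMap.apply ℝ ℝ ((0:ℝ),(1:ℝ))).contDiff.comp
      (hF.fderiv_right (by norm_num))
  -- mixed second partial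
  set E : ℝ × ℝ → ℝ := fun p => fderiv ℝ P p ((1:ℝ), (0:ℝ)) with hEdef
  have hE : Continuous E :=
    ((ContinuousLinearMap.apply ℝ ℝ ((1:ℝ),(0:ℝ))).contDiff.comp
      (hP.fderiv_right (m := 0) (by norm_num))).continuous
  -- derivative facts
  have hFd : ∀ h t : ℝ, HasDerivAt (fun t' => F (h, t')) (P (h, t)) t := by
    intro h t
    have h1 : HasDerivAt (fun t' : ℝ => ((h, t') : ℝ × ℝ)) ((0:ℝ), (1:ℝ)) t :=
      HasDerivAt.prodMk (hasDerivAt_const t h) (hasDerivAt_id t)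
    exact ((hF.differentiable (by norm_num) (h, t)).hasFDerivAt).comp_hasDerivAt t h1
  have hPd : ∀ s t : ℝ, HasDerivAt (fun s' => P (s', t)) (E (s, t)) s := by
    intro s t
    have h1 : HasDerivAt (fun s' : ℝ => ((s', t) : ℝ × ℝ)) ((1:ℝ), (0:ℝ)) s :=
      HasDerivAt.prodMk (hasDerivAt_id s) (hasDerivAt_const s t)
    exact ((hP.differentiable (by norm_num) (s, t)).hasFDerivAt).comp_hasDerivAt s h1
  -- FTC identities
  have hInt1 : ∀ h t : ℝ, P (h, t) - P (0, t) = ∫ s in (0:ℝ)..h, E (s, t) := by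
    intro h t
    have cE : Continuous fun s => E (s, t) :=
      hE.comp (continuous_id.prodMk continuous_const)
    rw [intervalIntegral.integral_eq_sub_of_hasDerivAt (fun s _ => hPd s t)
      (cE.intervalIntegrable 0 h)]
  have hInt2 : ∀ h k : ℝ,
      F (h, k) - F (h, 0) - (F (0, k) - F (0, 0)) =
        ∫ t in (0:ℝ)..k, (P (h, t) - P (0, t)) := by
    intro h k
    have cP1 : Continuous fun t => P (h, t) :=
      hP.continuous.comp (continuous_const.prodMk continuous_id)
    have cP0 : Continuous fun t => P (0, t) :=
      hP.continuous.comp (continuous_const.prodMk continuous_id)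
    have i1 : F (h, k) - F (h, 0) = ∫ t in (0:ℝ)..k, P (h, t) :=
      (intervalIntegral.integral_eq_sub_of_hasDerivAt (fun t _ => hFd h t)
        (cP1.intervalIntegrable 0 k)).symm
    have i2 : F (0, k) - F (0, 0) = ∫ t in (0:ℝ)..k, P (0, t) :=
      (intervalIntegral.integral_eq_sub_of_hasDerivAt (fun t _ => hFd 0 t)
        (cP0.intervalIntegrable 0 k)).symm
    rw [i1, i2, ← intervalIntegral.integral_sub
      (cP1.intervalIntegrable 0 k) (cP0.intervalIntegrable 0 k)]
  -- the second difference quotient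
  set g : ℝ × ℝ → ℝ := fun p =>
    (p.1 * p.2)⁻¹ * (F (p.1, p.2) - F (p.1, 0) - F (0, p.2) + F (0, 0)) with hgdef
  set L : ℝ := E (0, 0) with hLdef
  set l : Filter ℝ := nhdsWithin 0 {0}ᶜ with hldef
  -- main analytic estimate
  have hkey : Tendsto g (l ×ˢ l) (nhds L) := by
    rw [Metric.tendsto_nhds]
    intro ε hε
    obtain ⟨δ, hδ, hball⟩ := Metric.continuousAt_iff.1 hE.continuousAt (ε/2) (by linarith)
    have hq : ∀ᶠ a : ℝ in l, a ∈ Metric.ball (0:ℝ) δ ∧ a ≠ 0 := by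
      filter_upwards [inter_mem_nhdsWithin {0}ᶜ (Metric.ball_mem_nhds (0:ℝ) hδ)] with a ha
      exact ⟨ha.2, ha.1⟩
    have hmem := Filter.Eventually.prod_mk hq hq
    filter_upwards [hmem] with p hp
    obtain ⟨⟨hp1, hp1n⟩, ⟨hp2, hp2n⟩⟩ := hp
    have hEbound : ∀ s t : ℝ, |s| < δ → |t| < δ → |E (s, t) - L| ≤ ε/2 := by
      intro s t hs ht
      have : dist (s, t) ((0:ℝ), (0:ℝ)) < δ := by
        rw [Prod.dist_eq]
        simp only [Real.dist_eq, sub_zero]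
        exact max_lt hs ht
      exact le_of_lt (by simpa [Real.dist_eq, hLdef] using hball this)
    have h1 : |p.1| < δ := by simpa [Real.dist_eq] using hp1
    have h2 : |p.2| < δ := by simpa [Real.dist_eq] using hp2
    -- inner bound
    have hinner : ∀ t : ℝ, |t| < δ → |P (p.1, t) - P (0, t) - p.1 * L| ≤ ε/2 * |p.1| := by
      intro t ht
      have : P (p.1, t) - P (0, t) - p.1 * L = ∫ s in (0:ℝ)..p.1, (E (s, t) - L) := by
        have cE : Continuous fun s => E (s, t) :=
          hE.comp (continuous_id.prodMk continuous_const)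
        rw [intervalIntegral.integral_sub
          (cE.intervalIntegrable 0 p.1) (intervalIntegrable_const), ← hInt1 p.1 t]
        simp [mul_comm]
      rw [this]
      have := intervalIntegral.norm_integral_le_of_norm_le_const
        (C := ε/2) (f := fun s => E (s, t) - L) (a := (0:ℝ)) (b := p.1)
        (fun s hs => by
          have : |s| ≤ |p.1| := abs_le_abs_of_uIoc hs
          exact hEbound s t (lt_of_le_of_lt this h1) ht)
      simpa [Real.norm_eq_abs, mul_comm] using this
    -- outer bound
    have houter : |(F (p.1, p.2) - F (p.1, 0) - F (0, p.2) + F (0, 0)) - p.1 * p.2 * L|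
        ≤ ε/2 * |p.1| * |p.2| := by
      have heq : (F (p.1, p.2) - F (p.1, 0) - F (0, p.2) + F (0, 0)) - p.1 * p.2 * L =
          ∫ t in (0:ℝ)..p.2, (P (p.1, t) - P (0, t) - p.1 * L) := by
        have hc1 : Continuous fun t => P (p.1, t) - P (0, t) :=
          (hP.continuous.comp (continuous_const.prodMk continuous_id)).sub
            (hP.continuous.comp (continuous_const.prodMk continuous_id))
        rw [intervalIntegral.integral_sub (hc1.intervalIntegrable 0 p.2)
          intervalIntegrable_const, ← hInt2 p.1 p.2]
        simp; ring
      rw [heq]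
      have := intervalIntegral.norm_integral_le_of_norm_le_const
        (C := ε/2 * |p.1|) (f := fun t => P (p.1, t) - P (0, t) - p.1 * L)
        (a := (0:ℝ)) (b := p.2)
        (fun t ht => by
          have : |t| ≤ |p.2| := abs_le_abs_of_uIoc ht
          exact hinner t (lt_of_le_of_lt this h2))
      simpa [Real.norm_eq_abs, mul_comm] using this
    -- conclude
    have hne : p.1 * p.2 ≠ 0 := mul_ne_zero hp1n hp2n
    have : g p - L = (p.1 * p.2)⁻¹ *
        ((F (p.1, p.2) - F (p.1, 0) - F (0, p.2) + F (0, 0)) - p.1 * p.2 * L) := by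
      simp only [hgdef]
      rw [mul_sub, inv_mul_cancel_left₀ hne]
    rw [Real.dist_eq, this, abs_mul, abs_inv, abs_mul]
    calc (|p.1| * |p.2|)⁻¹ * |(F (p.1, p.2) - F (p.1, 0) - F (0, p.2) + F (0, 0))
          - p.1 * p.2 * L|
        ≤ (|p.1| * |p.2|)⁻¹ * (ε/2 * |p.1| * |p.2|) := by
          apply mul_le_mul_of_nonneg_left houter
          positivity
      _ = ε/2 := by
          field_simp
      _ < ε := by linarith
  -- inner products of difference quotients equal g
  set Δ : ℝ → Lp ℝ 2 μ := fun h => h⁻¹ • (u (x + h • e) - u x) with hΔdef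
  have hG : ∀ h k : ℝ, (inner ℝ (Δ h) (Δ k) : ℝ) = g (h, k) := by
    intro h k
    have hzero : x + (0:ℝ) • e = x := by simp
    simp only [hΔdef, real_inner_smul_left, real_inner_smul_right, inner_sub_left,
      inner_sub_right, cEq, hgdef, hFdef, hzero]
    ring
  -- norm of differences tends to zero
  have hnormsq : Tendsto (fun p : ℝ × ℝ => ‖Δ p.1 - Δ p.2‖^2) (l ×ˢ l) (nhds 0) := by
    have hg11 : Tendsto (fun p : ℝ × ℝ => g (p.1, p.1)) (l ×ˢ l) (nhds L) :=
      hkey.comp (tendsto_fst.prodMk tendsto_fst)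
    have hg12 : Tendsto (fun p : ℝ × ℝ => g (p.1, p.2)) (l ×ˢ l) (nhds L) := by
      simpa using hkey
    have hg22 : Tendsto (fun p : ℝ × ℝ => g (p.2, p.2)) (l ×ˢ l) (nhds L) :=
      hkey.comp (tendsto_snd.prodMk tendsto_snd)
    have : Tendsto (fun p : ℝ × ℝ => g (p.1, p.1) - 2 * g (p.1, p.2) + g (p.2, p.2))
        (l ×ˢ l) (nhds (L - 2 * L + L)) :=
      (hg11.sub (hg12.const_mul 2)).add hg22
    have hzero : L - 2 * L + L = 0 := by ring
    rw [hzero] at this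
    refine this.congr fun p => ?_
    rw [← hG p.1 p.1, ← hG p.1 p.2, ← hG p.2 p.2]
    rw [@norm_sub_sq_real, real_inner_self_eq_norm_sq, real_inner_self_eq_norm_sq]
  have hnorm : Tendsto (fun p : ℝ × ℝ => dist (Δ p.1) (Δ p.2)) (l ×ˢ l) (nhds 0) := by
    have := hnormsq.sqrt
    rw [Real.sqrt_zero] at this
    refine this.congr fun p => ?_
    rw [Real.sqrt_sq (norm_nonneg _), dist_eq_norm]
  -- Cauchy, hence convergent
  have : NeBot l := by
    rw [hldef]; infer_instance
  rw [← cauchy_map_iff_exists_tendsto (f := Δ) (l := l)]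
  rw [cauchy_map_iff']
  exact tendsto_uniformity_iff_dist_tendsto_zero.2 hnorm
end

section
/- Let u be a second-order process with covariance function c, let k ≥ 1, and assume c is 2k-times continuously differentiable on ℝ^d × ℝ^d. Then for every multi-index α = (α₁,…,α_d) with |α| = α₁ + ⋯ + α_d ≤ k, the iterated mean-square partial derivative ∂^α u(x) exists for all x ∈ ℝ^d, and for all multi-indices α, β with |α| ≤ k, |β| ≤ k and all x, x' ∈ ℝ^d one has ∫ (∂^α u(x)) · (∂^β u(x')) dμ = ∂^α_x ∂^β_{x'} c(x, x'), where ∂^α_x ∂^β_{x'} c denotes the mixed partial derivative of c of multi-order α in the first argument and β in the second argument. -/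
open MeasureTheory Filter

/-- `v` has mean-square (norm) partial derivative `w` in the coordinate direction `r`,
at every point: `(v(x + h e_r) − v(x))/h → w(x)` in the norm of `E` as `h → 0`. -/
def HasMSPartialDeriv {d : ℕ} {E : Type*} [NormedAddCommGroup E] [NormedSpace ℝ E]
    (v : (Fin d → ℝ) → E) (r : Fin d) (w : (Fin d → ℝ) → E) : Prop :=
  ∀ x : Fin d → ℝ,
    Tendsto (fun h : ℝ => h⁻¹ • (v (x + h • (Pi.single r 1 : Fin d → ℝ)) - v x))
      (nhdsWithin 0 {0}ᶜ) (nhds (w x))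

/-- `w` is the iterated mean-square partial derivative of `v` along the list of
coordinate directions `L` (applied successively). -/
def HasMSIterDeriv {d : ℕ} {E : Type*} [NormedAddCommGroup E] [NormedSpace ℝ E]
    (v : (Fin d → ℝ) → E) : List (Fin d) → ((Fin d → ℝ) → E) → Prop
  | [], w => w = v
  | r :: L, w => ∃ w', HasMSIterDeriv v L w' ∧ HasMSPartialDeriv w' r w

/-- Iterated partial derivative of a scalar function along a list of coordinate directions. -/
noncomputable def partialDerivList {d : ℕ} :
    List (Fin d) → ((Fin d → ℝ) → ℝ) → ((Fin d → ℝ) → ℝ)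
  | [], f => f
  | r :: L, f => fun x => fderiv ℝ (partialDerivList L f) x (Pi.single r 1)

section Aux

variable {d : ℕ}

local notation "V" => Fin d → ℝ

/-- Lagrange MVT from 0 to h, any sign of h. -/
lemma mvt_zero (F F' : ℝ → ℝ) (hF : ∀ t, HasDerivAt F (F' t) t) {h : ℝ} (hh : h ≠ 0) :
    ∃ c, |c| ≤ |h| ∧ F h - F 0 = h * F' c := by
  rcases hh.lt_or_gt with hlt | hgt
  · obtain ⟨c, hc, hceq⟩ := exists_hasDerivAt_eq_slope F F' hlt
      (fun t _ => (hF t).continuousAt.continuousWithinAt) (fun t _ => hF t)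
    refine ⟨c, ?_, ?_⟩
    · rw [abs_of_neg hc.2, abs_of_neg hlt]; linarith [hc.1]
    · rw [eq_div_iff (by linarith [hc.1, hc.2] : (0:ℝ) - h ≠ 0)] at hceq
      linarith [hceq]
  · obtain ⟨c, hc, hceq⟩ := exists_hasDerivAt_eq_slope F F' hgt
      (fun t _ => (hF t).continuousAt.continuousWithinAt) (fun t _ => hF t)
    refine ⟨c, ?_, ?_⟩
    · rw [abs_of_pos hc.1, abs_of_pos hgt]; exact hc.2.le
    · rw [eq_div_iff (by linarith : h - 0 ≠ 0)] at hceq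
      linarith [hceq]



/-- derivative along a line -/
lemma hasDerivAt_line {E F : Type*} [NormedAddCommGroup E] [NormedSpace ℝ E]
    [NormedAddCommGroup F] [NormedSpace ℝ F]
    (f : E → F) (x a : E) (t : ℝ) (hf : DifferentiableAt ℝ f (x + t • a)) :
    HasDerivAt (fun s : ℝ => f (x + s • a)) (fderiv ℝ f (x + t • a) a) t := by
  have hγ : HasDerivAt (fun s : ℝ => x + s • a) a t := by
    simpa using ((hasDerivAt_id t).smul_const a).const_add x
  exact hf.hasFDerivAt.comp_hasDerivAt t hγ

noncomputable def pd1 (r : Fin d) (f : V × V → ℝ) : V × V → ℝ :=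
  fun p => fderiv ℝ f p ((Pi.single r 1 : V), 0)

noncomputable def pd2 (r : Fin d) (f : V × V → ℝ) : V × V → ℝ :=
  fun p => fderiv ℝ f p (0, (Pi.single r 1 : V))

noncomputable def pdl1 : List (Fin d) → (V × V → ℝ) → (V × V → ℝ)
  | [], f => f
  | r :: L, f => pd1 r (pdl1 L f)

noncomputable def pdl2 : List (Fin d) → (V × V → ℝ) → (V × V → ℝ)
  | [], f => f
  | r :: L, f => pd2 r (pdl2 L f)

lemma contDiff_pd1 {n : ℕ} {f : V × V → ℝ} (hf : ContDiff ℝ (n + 1 : ℕ) f) (r : Fin d) :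
    ContDiff ℝ (n : ℕ) (pd1 r f) :=
  (hf.fderiv_right (by exact_mod_cast le_rfl)).clm_apply contDiff_const

lemma contDiff_pd2 {n : ℕ} {f : V × V → ℝ} (hf : ContDiff ℝ (n + 1 : ℕ) f) (r : Fin d) :
    ContDiff ℝ (n : ℕ) (pd2 r f) :=
  (hf.fderiv_right (by exact_mod_cast le_rfl)).clm_apply contDiff_const

lemma contDiff_pdl1 {n : ℕ} {f : V × V → ℝ} (hf : ContDiff ℝ (n : ℕ) f) :
    ∀ L : List (Fin d), L.length ≤ n → ContDiff ℝ ((n - L.length : ℕ) : ℕ∞) (pdl1 L f)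
  | [], _ => by simpa [pdl1] using hf
  | r :: L, hL => by
    have hlen : L.length < n := by simpa using Nat.lt_of_succ_le (by simpa using hL)
    have ih := contDiff_pdl1 hf L hlen.le
    have h1 : n - L.length = (n - (L.length + 1)) + 1 := by omega
    rw [h1] at ih
    have := contDiff_pd1 ih r
    simp only [pdl1, List.length_cons]; exact this

lemma contDiff_pdl2 {n : ℕ} {f : V × V → ℝ} (hf : ContDiff ℝ (n : ℕ) f) :
    ∀ L : List (Fin d), L.length ≤ n → ContDiff ℝ ((n - L.length : ℕ) : ℕ∞) (pdl2 L f)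
  | [], _ => by simpa [pdl2] using hf
  | r :: L, hL => by
    have hlen : L.length < n := by simpa using Nat.lt_of_succ_le (by simpa using hL)
    have ih := contDiff_pdl2 hf L hlen.le
    have h1 : n - L.length = (n - (L.length + 1)) + 1 := by omega
    rw [h1] at ih
    have := contDiff_pd2 ih r
    simp only [pdl2, List.length_cons]; exact this

lemma contDiff_partialDerivList {n : ℕ} {f : V → ℝ} (hf : ContDiff ℝ (n : ℕ) f) :
    ∀ L : List (Fin d), L.length ≤ n →
      ContDiff ℝ ((n - L.length : ℕ) : ℕ∞) (partialDerivList L f)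
  | [], _ => by simpa [partialDerivList] using hf
  | r :: L, hL => by
    have hlen : L.length < n := by simpa using Nat.lt_of_succ_le (by simpa using hL)
    have ih := contDiff_partialDerivList hf L hlen.le
    have h1 : n - L.length = (n - (L.length + 1)) + 1 := by omega
    rw [h1] at ih
    have : ContDiff ℝ ((n - (L.length+1) : ℕ) : ℕ∞)
        (fun x => fderiv ℝ (partialDerivList L f) x (Pi.single r 1)) :=
      (ih.fderiv_right (by exact_mod_cast le_rfl)).clm_apply contDiff_const
    simpa [partialDerivList] using this

/-- partial fderiv in second variable -/
lemma fderiv_snd_eq {f : V × V → ℝ} {y z : V} (hf : DifferentiableAt ℝ f (y, z)) (v : V) :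
    fderiv ℝ (fun z' => f (y, z')) z v = fderiv ℝ f (y, z) (0, v) := by
  have hγ : HasFDerivAt (fun z' : V => ((y, z') : V × V))
      ((0 : V →L[ℝ] V).prod (ContinuousLinearMap.id ℝ V)) z :=
    (hasFDerivAt_const y z).prodMk (hasFDerivAt_id z)
  have := (hf.hasFDerivAt.comp z hγ).fderiv
  rw [show (fun z' => f (y, z')) = f ∘ Prod.mk y from rfl, this]
  simp

lemma fderiv_fst_eq {f : V × V → ℝ} {y z : V} (hf : DifferentiableAt ℝ f (y, z)) (v : V) :
    fderiv ℝ (fun y' => f (y', z)) y v = fderiv ℝ f (y, z) (v, 0) := by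
  have hγ : HasFDerivAt (fun y' : V => ((y', z) : V × V))
      ((ContinuousLinearMap.id ℝ V).prod (0 : V →L[ℝ] V)) y :=
    (hasFDerivAt_id y).prodMk (hasFDerivAt_const z y)
  have := (hf.hasFDerivAt.comp y hγ).fderiv
  rw [show (fun y' => f (y', z)) = f ∘ (fun y' => (y', z)) from rfl, this]
  simp

/-- R2: partial derivative list in the second variable -/
lemma partialDerivList_snd {n : ℕ} {f : V × V → ℝ} (hf : ContDiff ℝ (n : ℕ) f) :
    ∀ L : List (Fin d), L.length ≤ n → ∀ y : V,
      partialDerivList L (fun z => f (y, z)) = fun z => pdl2 L f (y, z)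
  | [], _, y => rfl
  | r :: L, hL, y => by
    have hlen : L.length < n := by simpa using Nat.lt_of_succ_le (by simpa using hL)
    have ih := partialDerivList_snd hf L hlen.le y
    have hsm := contDiff_pdl2 hf L hlen.le
    have hdiff : Differentiable ℝ (pdl2 L f) := by
      apply hsm.differentiable
      exact_mod_cast (by omega : n - L.length ≠ 0)
    funext z
    show fderiv ℝ (partialDerivList L fun z => f (y, z)) z (Pi.single r 1) = _
    rw [ih, fderiv_snd_eq (hdiff (y, z))]
    rfl

lemma partialDerivList_fst {n : ℕ} {f : V × V → ℝ} (hf : ContDiff ℝ (n : ℕ) f) :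
    ∀ L : List (Fin d), L.length ≤ n → ∀ z : V,
      partialDerivList L (fun y => f (y, z)) = fun y => pdl1 L f (y, z)
  | [], _, z => rfl
  | r :: L, hL, z => by
    have hlen : L.length < n := by simpa using Nat.lt_of_succ_le (by simpa using hL)
    have ih := partialDerivList_fst hf L hlen.le z
    have hsm := contDiff_pdl1 hf L hlen.le
    have hdiff : Differentiable ℝ (pdl1 L f) := by
      apply hsm.differentiable
      exact_mod_cast (by omega : n - L.length ≠ 0)
    funext y
    show fderiv ℝ (partialDerivList L fun y => f (y, z)) y (Pi.single r 1) = _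
    rw [ih, fderiv_fst_eq (hdiff (y, z))]
    rfl

lemma contDiff_fderiv_apply {E : Type*} [NormedAddCommGroup E] [NormedSpace ℝ E]
    {n : ℕ} {f : E → ℝ} (hf : ContDiff ℝ (n + 1 : ℕ) f) (v : E) :
    ContDiff ℝ (n : ℕ) (fun q => fderiv ℝ f q v) :=
  (hf.fderiv_right (by exact_mod_cast le_rfl)).clm_apply contDiff_const

lemma secondDiff_tendsto {f : V × V → ℝ} (hf : ContDiff ℝ (2 : ℕ) f) (x x' a b : V) :
    Tendsto (fun p : ℝ × ℝ => (p.1 * p.2)⁻¹ *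
        (f (x + p.1 • a, x' + p.2 • b) - f (x + p.1 • a, x')
          - f (x, x' + p.2 • b) + f (x, x')))
      ((nhdsWithin 0 {0}ᶜ) ×ˢ (nhdsWithin 0 {0}ᶜ))
      (nhds (fderiv ℝ (fun q => fderiv ℝ f q (a, 0)) (x, x') (0, b))) := by
  set G : V × V → ℝ := fun q => fderiv ℝ f q (a, 0) with hG
  set M : V × V → ℝ := fun q => fderiv ℝ G q (0, b) with hM
  have hdf : Differentiable ℝ f := hf.differentiable (by norm_num)
  have hGc : ContDiff ℝ (1 : ℕ) G := contDiff_fderiv_apply (n := 1) hf (a, 0)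
  have hdG : Differentiable ℝ G := hGc.differentiable (by norm_num)
  have hMc : Continuous M :=
    ((contDiff_fderiv_apply (n := 0) hGc (0, b)).continuous)
  rw [Metric.tendsto_nhds]
  intro ε hε
  obtain ⟨δ, hδpos, hδ⟩ := Metric.continuousAt_iff.mp (hMc.continuousAt (x := (x, x'))) ε hε
  have hden : (0:ℝ) < ‖a‖ + ‖b‖ + 1 := by positivity
  set δ₁ : ℝ := δ / (‖a‖ + ‖b‖ + 1) with hδ₁
  have hδ₁pos : 0 < δ₁ := by positivity
  have h1 : ∀ᶠ h in nhdsWithin (0:ℝ) {0}ᶜ, |h| < δ₁ ∧ h ≠ 0 := by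
    refine Filter.Eventually.and ?_ ?_
    · refine Eventually.filter_mono nhdsWithin_le_nhds ?_
      have : Metric.ball (0:ℝ) δ₁ ∈ nhds (0:ℝ) := Metric.ball_mem_nhds _ hδ₁pos
      filter_upwards [this] with t ht
      simpa [Real.dist_eq] using ht
    · exact eventually_mem_nhdsWithin
  filter_upwards [h1.prod_mk h1] with p hp
  obtain ⟨⟨hh1, hh0⟩, hg1, hg0⟩ := hp
  set h := p.1
  set g := p.2
  -- first MVT
  set F₁ : ℝ → ℝ := fun s => f (x + s • a, x' + g • b) - f (x + s • a, x') with hF₁def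
  have hF₁ : ∀ s, HasDerivAt F₁ (G (x + s • a, x' + g • b) - G (x + s • a, x')) s := by
    intro s
    have t1 := hasDerivAt_line f ((x, x' + g • b)) (a, 0) s (hdf _)
    have t2 := hasDerivAt_line f ((x, x')) (a, 0) s (hdf _)
    simp only [Prod.smul_mk, smul_zero, Prod.mk_add_mk, add_zero] at t1 t2
    exact t1.sub t2
  obtain ⟨θ, hθ, hθeq⟩ := mvt_zero F₁ _ hF₁ hh0
  -- second MVT
  set F₂ : ℝ → ℝ := fun t => G (x + θ • a, x' + t • b) with hF₂def
  have hF₂ : ∀ t, HasDerivAt F₂ (M (x + θ • a, x' + t • b)) t := by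
    intro t
    have t1 := hasDerivAt_line G ((x + θ • a, x')) (0, b) t (hdG _)
    simp only [Prod.smul_mk, smul_zero, Prod.mk_add_mk, add_zero] at t1
    exact t1
  obtain ⟨σ, hσ, hσeq⟩ := mvt_zero F₂ _ hF₂ hg0
  have hF₁0 : F₁ 0 = f (x, x' + g • b) - f (x, x') := by simp [hF₁def]
  have hF₂0 : F₂ 0 = G (x + θ • a, x') := by simp [hF₂def]
  have e1 : f (x + h • a, x' + g • b) - f (x + h • a, x')
      - f (x, x' + g • b) + f (x, x') = F₁ h - F₁ 0 := by
    rw [hF₁0]; simp only [hF₁def]; ring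
  have e2 : G (x + θ • a, x' + g • b) - G (x + θ • a, x') = F₂ g - F₂ 0 := by
    rw [hF₂0]
  set ξ : V × V := (x + θ • a, x' + σ • b) with hξ
  have hnum : f (x + h • a, x' + g • b) - f (x + h • a, x')
      - f (x, x' + g • b) + f (x, x') = h * g * M ξ := by
    rw [e1, hθeq, e2, hσeq]; ring
  have hq : (h * g)⁻¹ * (f (x + h • a, x' + g • b) - f (x + h • a, x')
      - f (x, x' + g • b) + f (x, x')) = M ξ := by
    rw [hnum]; field_simp
  rw [hq]
  apply hδ
  rw [Prod.dist_eq]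
  have hda : dist (x + θ • a) x = |θ| * ‖a‖ := by
    rw [dist_eq_norm, add_sub_cancel_left, norm_smul, Real.norm_eq_abs]
  have hdb : dist (x' + σ • b) x' = |σ| * ‖b‖ := by
    rw [dist_eq_norm, add_sub_cancel_left, norm_smul, Real.norm_eq_abs]
  have hδval : δ₁ * (‖a‖ + ‖b‖ + 1) = δ := div_mul_cancel₀ _ hden.ne'
  have hna : (0:ℝ) ≤ ‖a‖ := norm_nonneg a
  have hnb : (0:ℝ) ≤ ‖b‖ := norm_nonneg b
  have habs : (0:ℝ) ≤ |h| := abs_nonneg h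
  have hgabs : (0:ℝ) ≤ |g| := abs_nonneg g
  have c1 : |θ| * ‖a‖ < δ := by nlinarith [abs_nonneg θ]
  have c2 : |σ| * ‖b‖ < δ := by nlinarith [abs_nonneg σ]
  simp only [hξ, hda, hdb]
  exact max_lt c1 c2


lemma inner_msderiv_eq {H : Type*} [NormedAddCommGroup H] [InnerProductSpace ℝ H]
    (w : (Fin d → ℝ) → H) (z W : H) (x e : Fin d → ℝ) (φ : (Fin d → ℝ) → ℝ)
    (hw : Tendsto (fun h : ℝ => h⁻¹ • (w (x + h • e) - w x)) (nhdsWithin 0 {0}ᶜ) (nhds W))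
    (hφ : DifferentiableAt ℝ φ x) (heq : ∀ y, (inner ℝ z (w y) : ℝ) = φ y) :
    (inner ℝ z W : ℝ) = fderiv ℝ φ x e := by
  have h1 : Tendsto (fun h : ℝ => (inner ℝ z (h⁻¹ • (w (x + h • e) - w x)) : ℝ))
      (nhdsWithin 0 {0}ᶜ) (nhds (inner ℝ z W)) :=
    ((innerSL ℝ z).continuous.tendsto W).comp hw
  have h2 : (fun h : ℝ => (inner ℝ z (h⁻¹ • (w (x + h • e) - w x)) : ℝ))
      = slope (fun s : ℝ => φ (x + s • e)) 0 := by
    funext h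
    rw [slope_def_field]
    simp only [inner_smul_right, inner_sub_right, heq]
    have : x + (0:ℝ) • e = x := by simp
    rw [this]
    field_simp
    rw [sub_zero]
  have h3 : HasDerivAt (fun s : ℝ => φ (x + s • e)) (fderiv ℝ φ x e) 0 := by
    have := hasDerivAt_line φ x e 0 (by simpa using hφ)
    simpa using this
  have h4 := hasDerivAt_iff_tendsto_slope.mp h3
  rw [h2] at h1
  exact tendsto_nhds_unique h1 h4

lemma exists_ms_deriv {H : Type*} [NormedAddCommGroup H] [InnerProductSpace ℝ H]
    [CompleteSpace H]
    (w : (Fin d → ℝ) → H) (K : V × V → ℝ) (hK : ContDiff ℝ (2 : ℕ) K)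
    (hcov : ∀ y z, (inner ℝ (w y) (w z) : ℝ) = K (y, z)) (r : Fin d) (x : V) :
    ∃ W, Tendsto (fun h : ℝ => h⁻¹ • (w (x + h • (Pi.single r 1 : V)) - w x))
      (nhdsWithin 0 {0}ᶜ) (nhds W) := by
  set e : V := (Pi.single r 1 : V) with he
  set v : ℝ → H := fun h => h⁻¹ • (w (x + h • e) - w x) with hv
  set l := nhdsWithin (0:ℝ) {0}ᶜ with hl
  haveI : (nhdsWithin (0:ℝ) {0}ᶜ).NeBot := inferInstance
  set Lval : ℝ := fderiv ℝ (fun q => fderiv ℝ K q (e, 0)) (x, x) (0, e) with hLval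
  have hΦ : Tendsto (fun p : ℝ × ℝ => (inner ℝ (v p.1) (v p.2) : ℝ)) (l ×ˢ l) (nhds Lval) := by
    have heqf : (fun p : ℝ × ℝ => (inner ℝ (v p.1) (v p.2) : ℝ))
        = fun p : ℝ × ℝ => (p.1 * p.2)⁻¹ *
            (K (x + p.1 • e, x + p.2 • e) - K (x + p.1 • e, x)
              - K (x, x + p.2 • e) + K (x, x)) := by
      funext p
      rw [hv]
      simp only [real_inner_smul_left, real_inner_smul_right, inner_sub_left,
        inner_sub_right, hcov]
      rw [mul_inv]
      ring
    rw [heqf]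
    exact secondDiff_tendsto hK x x e e
  have hdiag : Tendsto (fun h : ℝ => (inner ℝ (v h) (v h) : ℝ)) l (nhds Lval) :=
    hΦ.comp (tendsto_id.prodMk tendsto_id)
  have hnsq : Tendsto (fun p : ℝ × ℝ => ‖v p.1 - v p.2‖ ^ 2) (l ×ˢ l) (nhds 0) := by
    have heqf : (fun p : ℝ × ℝ => ‖v p.1 - v p.2‖ ^ 2)
        = fun p : ℝ × ℝ => (inner ℝ (v p.1) (v p.1) : ℝ)
            - 2 * (inner ℝ (v p.1) (v p.2) : ℝ) + (inner ℝ (v p.2) (v p.2) : ℝ) := by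
      funext p
      rw [norm_sub_sq_real, real_inner_self_eq_norm_sq, real_inner_self_eq_norm_sq]
    rw [heqf]
    have h0 := ((hdiag.comp tendsto_fst).sub (hΦ.const_mul 2)).add (hdiag.comp tendsto_snd)
    have hz : Lval - 2 * Lval + Lval = 0 := by ring
    rw [hz] at h0
    simpa [Function.comp] using h0
  have hdist : Tendsto (fun p : ℝ × ℝ => dist (v p.1) (v p.2)) (l ×ˢ l) (nhds 0) := by
    have := hnsq.sqrt
    simp only [Real.sqrt_zero] at this
    apply this.congr
    intro p
    rw [Real.sqrt_sq (norm_nonneg _), dist_eq_norm]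
  have hcauchy : Cauchy (Filter.map v l) :=
    cauchy_map_iff.2 ⟨inferInstance, tendsto_uniformity_iff_dist_tendsto_zero.2 hdist⟩
  obtain ⟨W, hW⟩ := CompleteSpace.complete hcauchy
  exact ⟨W, hW⟩


variable {H : Type*} [NormedAddCommGroup H] [InnerProductSpace ℝ H]

lemma crossA (u : V → H) (C : V × V → ℝ) (n : ℕ) (hC : ContDiff ℝ (n : ℕ) C)
    (hcov : ∀ y z, (inner ℝ (u y) (u z) : ℝ) = C (y, z)) :
    ∀ L : List (Fin d), ∀ w : V → H, L.length ≤ n → HasMSIterDeriv u L w →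
      ∀ x z, (inner ℝ (u x) (w z) : ℝ) = pdl2 L C (x, z) := by
  intro L
  induction L with
  | nil =>
    intro w _ hw x z
    have hwu : w = u := hw
    rw [hwu]
    exact hcov x z
  | cons r L ih =>
    intro w hL hw x z
    obtain ⟨w', hw', hpd⟩ := hw
    have hlen : L.length < n := by
      simp only [List.length_cons] at hL; omega
    have ihw := ih w' hlen.le hw'
    have hsm := contDiff_pdl2 hC L hlen.le
    have hdiff : Differentiable ℝ (pdl2 L C) :=
      hsm.differentiable (by exact_mod_cast (by omega : n - L.length ≠ 0))
    have hφdiff : DifferentiableAt ℝ (fun z' => pdl2 L C (x, z')) z := by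
      exact (hdiff (x, z)).comp z ((differentiableAt_const x).prodMk differentiableAt_id)
    have key := inner_msderiv_eq w' (u x) (w z) z (Pi.single r 1)
      (fun z' => pdl2 L C (x, z')) (hpd z) hφdiff (fun y => ihw x y)
    rw [key, fderiv_snd_eq (hdiff (x, z))]
    rfl

lemma crossB (u : V → H) :
    ∀ L : List (Fin d), ∀ w : V → H, HasMSIterDeriv u L w →
      ∀ (ζ : H) (φ : V → ℝ) (m : ℕ), L.length ≤ m → ContDiff ℝ (m : ℕ) φ →
        (∀ y, (inner ℝ (u y) ζ : ℝ) = φ y) →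
        ∀ y, (inner ℝ (w y) ζ : ℝ) = partialDerivList L φ y := by
  intro L
  induction L with
  | nil =>
    intro w hw ζ φ m _ _ heq y
    have hwu : w = u := hw
    rw [hwu]
    exact heq y
  | cons r L ih =>
    intro w hw ζ φ m hL hφ heq y
    obtain ⟨w', hw', hpd⟩ := hw
    have hlen : L.length < m := by
      simp only [List.length_cons] at hL; omega
    have ihw := ih w' hw' ζ φ m hlen.le hφ heq
    have hsm := contDiff_partialDerivList hφ L hlen.le
    have hdiff : Differentiable ℝ (partialDerivList L φ) :=
      hsm.differentiable (by exact_mod_cast (by omega : m - L.length ≠ 0))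
    have heq' : ∀ y', (inner ℝ ζ (w' y') : ℝ) = partialDerivList L φ y' := by
      intro y'
      rw [real_inner_comm]
      exact ihw y'
    have key := inner_msderiv_eq w' ζ (w y) y (Pi.single r 1)
      (partialDerivList L φ) (hpd y) (hdiff y) heq'
    rw [real_inner_comm, key]
    rfl

lemma covIter (u : V → H) (C : V × V → ℝ) (n : ℕ) (hC : ContDiff ℝ (n : ℕ) C)
    (hcov : ∀ y z, (inner ℝ (u y) (u z) : ℝ) = C (y, z))
    (L : List (Fin d)) (w : V → H) (h2 : 2 * L.length ≤ n)
    (hw : HasMSIterDeriv u L w) :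
    ∀ y z, (inner ℝ (w y) (w z) : ℝ) = pdl1 L (pdl2 L C) (y, z) := by
  intro y z
  have hLn : L.length ≤ n := by omega
  have hA := crossA u C n hC hcov L w hLn hw
  have hsm := contDiff_pdl2 hC L hLn
  have hφ : ContDiff ℝ ((n - L.length : ℕ) : ℕ∞) (fun y' => pdl2 L C (y', z)) :=
    hsm.comp (contDiff_id.prodMk contDiff_const)
  have hB := crossB u L w hw (w z) (fun y' => pdl2 L C (y', z)) (n - L.length)
    (by omega) hφ (fun y' => hA y' z) y
  rw [hB]
  have hfst := partialDerivList_fst (f := pdl2 L C) (n := n - L.length) hsm L (by omega) z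
  rw [congrFun hfst y]

lemma exists_iter [CompleteSpace H] (u : V → H) (C : V × V → ℝ) (n : ℕ)
    (hC : ContDiff ℝ (n : ℕ) C)
    (hcov : ∀ y z, (inner ℝ (u y) (u z) : ℝ) = C (y, z)) :
    ∀ L : List (Fin d), 2 * L.length ≤ n → ∃ w, HasMSIterDeriv u L w := by
  intro L
  induction L with
  | nil => exact fun _ => ⟨u, rfl⟩
  | cons r L ih =>
    intro h
    have hLn : 2 * L.length ≤ n := by
      simp only [List.length_cons] at h; omega
    obtain ⟨w', hw'⟩ := ih hLn
    have hcov' := covIter u C n hC hcov L w' hLn hw'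
    have hL1 : L.length ≤ n := by omega
    have hKs : ContDiff ℝ ((n - L.length - L.length : ℕ) : ℕ∞) (pdl1 L (pdl2 L C)) :=
      contDiff_pdl1 (contDiff_pdl2 hC L hL1) L (by omega)
    have h2n : (2 : ℕ) ≤ n - L.length - L.length := by
      simp only [List.length_cons] at h; omega
    have hK2 : ContDiff ℝ ((2 : ℕ) : ℕ∞) (pdl1 L (pdl2 L C)) :=
      hKs.of_le (by exact_mod_cast h2n)
    have hex := fun x => exists_ms_deriv w' (pdl1 L (pdl2 L C)) hK2
      (fun y z => hcov' y z) r x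
    exact ⟨fun x => (hex x).choose, w', hw', fun x => (hex x).choose_spec⟩


lemma list_length_eq_sum_count (L : List (Fin d)) : L.length = ∑ r, L.count r := by
  induction L with
  | nil => simp
  | cons a L ih =>
    simp only [List.length_cons, List.count_cons, ih]
    rw [Finset.sum_add_distrib]
    congr 1
    simp

end Aux

/-- If the covariance function `c` of a second-order (mean-zero, `L²`)
process `u` is `2k`-times continuously differentiable (`k ≥ 1`), then for every
multi-index `α` with `|α| ≤ k` the iterated mean-square partial derivative `∂^α u`
exists everywhere, and for all multi-indices `α, β` with `|α| ≤ k`, `|β| ≤ k`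
(realized as lists of coordinate directions with the prescribed counts) one has
`∫ (∂^α u)(x) ⬝ (∂^β u)(x') dμ = ∂^α_x ∂^β_{x'} c (x, x')`. -/
theorem meanSquare_iteratedDeriv_exists_and_covariance
    {Ω : Type*} [MeasurableSpace Ω] {μ : Measure Ω} [IsProbabilityMeasure μ]
    {d : ℕ}
    (u : (Fin d → ℝ) → Lp ℝ 2 μ)
    (hmean : ∀ x : Fin d → ℝ, ∫ ω, (u x : Ω → ℝ) ω ∂μ = 0)
    (c : (Fin d → ℝ) → (Fin d → ℝ) → ℝ)
    (hc : ∀ x x' : Fin d → ℝ, c x x' = ∫ ω, (u x : Ω → ℝ) ω * (u x' : Ω → ℝ) ω ∂μ)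
    (k : ℕ) (hk : 1 ≤ k)
    (hC2k : ContDiff ℝ (2 * k) (Function.uncurry c)) :
    (∀ α : Fin d → ℕ, (∑ r, α r) ≤ k →
      ∀ L : List (Fin d), (∀ r, L.count r = α r) →
        ∃ w : (Fin d → ℝ) → Lp ℝ 2 μ, HasMSIterDeriv u L w) ∧
    (∀ α β : Fin d → ℕ, (∑ r, α r) ≤ k → (∑ r, β r) ≤ k →
      ∀ Lα Lβ : List (Fin d), (∀ r, Lα.count r = α r) → (∀ r, Lβ.count r = β r) →
        ∀ wα wβ : (Fin d → ℝ) → Lp ℝ 2 μ,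
          HasMSIterDeriv u Lα wα → HasMSIterDeriv u Lβ wβ →
          ∀ x x' : Fin d → ℝ,
            ∫ ω, (wα x : Ω → ℝ) ω * (wβ x' : Ω → ℝ) ω ∂μ
              = partialDerivList Lα (fun y => partialDerivList Lβ (fun z => c y z) x') x) := by
  have hinner : ∀ f g : Lp ℝ 2 μ, (inner ℝ f g : ℝ) = ∫ ω, (f : Ω → ℝ) ω * (g : Ω → ℝ) ω ∂μ := by
    intro f g
    rw [MeasureTheory.L2.inner_def]
    simp only [RCLike.inner_apply', conj_trivial]
  set C : (Fin d → ℝ) × (Fin d → ℝ) → ℝ := Function.uncurry c with hCdef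
  have hC : ContDiff ℝ ((2 * k : ℕ) : ℕ∞) C := hC2k
  have hcov : ∀ y z, (inner ℝ (u y) (u z) : ℝ) = C (y, z) := by
    intro y z
    rw [hinner, ← hc y z]
    rfl
  have hlength : ∀ (L : List (Fin d)) (α : Fin d → ℕ), (∑ r, α r) ≤ k →
      (∀ r, L.count r = α r) → L.length ≤ k := by
    intro L α hα hL
    rw [list_length_eq_sum_count]
    calc ∑ r, L.count r = ∑ r, α r := Finset.sum_congr rfl (fun r _ => hL r)
    _ ≤ k := hα
  constructor
  · intro α hα L hL
    exact exists_iter u C (2 * k) hC hcov L (by have := hlength L α hα hL; omega)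
  · intro α β hα hβ Lα Lβ hLα hLβ wα wβ hwα hwβ x x'
    have hlα : Lα.length ≤ k := hlength Lα α hα hLα
    have hlβ : Lβ.length ≤ k := hlength Lβ β hβ hLβ
    have hA := crossA u C (2 * k) hC hcov Lβ wβ (by omega) hwβ
    have hsmβ := contDiff_pdl2 hC Lβ (by omega : Lβ.length ≤ 2 * k)
    have hφ : ContDiff ℝ ((2 * k - Lβ.length : ℕ) : ℕ∞) (fun y => pdl2 Lβ C (y, x')) :=
      hsmβ.comp (contDiff_id.prodMk contDiff_const)
    have hB := crossB u Lα wα hwα (wβ x') (fun y => pdl2 Lβ C (y, x'))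
      (2 * k - Lβ.length) (by omega) hφ (fun y => hA y x') x
    rw [← hinner, hB]
    have hfun : (fun y => partialDerivList Lβ (fun z => c y z) x')
        = fun y => pdl2 Lβ C (y, x') := by
      funext y
      have hs := partialDerivList_snd (f := C) hC Lβ (by omega : Lβ.length ≤ 2 * k) y
      exact congrFun hs x'
    rw [hfun]
end

section
/- Let u be a second-order process with covariance function c, let k ≥ 1, and assume c is 2k-times continuously differentiable on ℝ^d × ℝ^d. Let L_α : ℝ^d → ℝ for each multi-index α with |α| ≤ k and B_β : ℝ^d → ℝ for each multi-index β with |β| ≤ k − 1 be arbitrary coefficient functions, and define for each x, x' ∈ ℝ^d the elements of L²(μ): L[u](x) = Σ_{|α| ≤ k} L_α(x) ∂^α u(x) and B[u](x') = Σ_{|β| ≤ k−1} B_β(x') ∂^β u(x'). Then ∫ L[u](x) · B[u](x') dμ = Σ_{|α| ≤ k} Σ_{|β| ≤ k−1} L_α(x) B_β(x') ∂^α_x ∂^β_{x'} c(x, x'), i.e. the covariance of the operator observations is obtained by applying the operator in x to the first argument of c and the operator in x' to the second argument. -/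
open MeasureTheory Filter

/-! ### Auxiliary lemmas -/

lemma sum_count_eq_length {d : ℕ} (l : List (Fin d)) : ∑ r, l.count r = l.length := by
  induction l with
  | nil => simp
  | cons a l ih =>
    simp only [List.count_cons, List.length_cons, Finset.sum_add_distrib, ih]
    simp [Finset.sum_ite_eq]

/-- Iterated partial derivatives of a `C^n` function are `C^m` provided the
number of derivatives taken plus `m` does not exceed `n`. -/
lemma contDiff_pdl {d : ℕ} (L : List (Fin d)) (f : (Fin d → ℝ) → ℝ) (n m : ℕ)
    (hf : ContDiff ℝ n f) (h : L.length + m ≤ n) :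
    ContDiff ℝ m (partialDerivList L f) := by
  induction L generalizing m with
  | nil => exact hf.of_le (by exact_mod_cast le_trans (Nat.le_add_left _ _) h)
  | cons r L ih =>
    have h' : L.length + (m + 1) ≤ n := by
      simpa [Nat.add_comm, Nat.add_assoc, Nat.add_left_comm] using h
    have := (ih (m+1) h').fderiv_right (m := m) (by exact_mod_cast le_refl ((m:WithTop ℕ∞)+1))
    show ContDiff ℝ m fun x => fderiv ℝ (partialDerivList L f) x (Pi.single r 1)
    exact this.clm_apply contDiff_const

/-- Joint smoothness of iterated partial derivatives in the second variable
of a jointly `C^n` function of two variables. -/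
lemma contDiff_pdl_snd {d : ℕ} (L : List (Fin d)) (c : (Fin d → ℝ) → (Fin d → ℝ) → ℝ) (n m : ℕ)
    (hc : ContDiff ℝ n (Function.uncurry c)) (h : L.length + m ≤ n) :
    ContDiff ℝ m (fun p : (Fin d → ℝ) × (Fin d → ℝ) =>
      partialDerivList L (fun z => c p.1 z) p.2) := by
  induction L generalizing m with
  | nil => exact hc.of_le (by exact_mod_cast le_trans (Nat.le_add_left _ _) h)
  | cons r L ih =>
    have h' : L.length + (m + 1) ≤ n := by
      simpa [Nat.add_comm, Nat.add_assoc, Nat.add_left_comm] using h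
    have IH := ih (m+1) h'
    have hcomp : ContDiff ℝ ((m:ℕ)+1 : ℕ)
        (fun q : ((Fin d → ℝ) × (Fin d → ℝ)) × (Fin d → ℝ) =>
          partialDerivList L (fun z => c q.1.1 z) q.2) := by
      have := IH.comp (f := fun q : ((Fin d → ℝ) × (Fin d → ℝ)) × (Fin d → ℝ) => (q.1.1, q.2))
        ((contDiff_fst.fst).prodMk contDiff_snd)
      exact this
    have hd : ContDiff ℝ m
        (fun p : (Fin d → ℝ) × (Fin d → ℝ) =>
          fderiv ℝ (fun z => partialDerivList L (fun z' => c p.1 z') z) p.2) := by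
      apply ContDiff.fderiv (f := fun (p : (Fin d → ℝ) × (Fin d → ℝ)) (z : Fin d → ℝ) =>
          partialDerivList L (fun z' => c p.1 z') z) (g := fun p => p.2)
      · exact hcomp
      · exact contDiff_snd
      · exact_mod_cast le_refl ((m:WithTop ℕ∞)+1)
    show ContDiff ℝ m fun p : (Fin d → ℝ) × (Fin d → ℝ) =>
      fderiv ℝ (partialDerivList L (fun z => c p.1 z)) p.2 (Pi.single r 1)
    exact hd.clm_apply contDiff_const

lemma integral_mul_eq_inner {Ω : Type*} [MeasurableSpace Ω] {μ : Measure Ω} (f g : Lp ℝ 2 μ) :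
    ∫ ω, (f : Ω → ℝ) ω * (g : Ω → ℝ) ω ∂μ = (inner ℝ f g : ℝ) := by
  rw [MeasureTheory.L2.inner_def]
  congr 1
  funext ω
  rw [Real.inner_apply]

/-- Key lemma: if `W` is the iterated mean-square derivative of `v` along `L`, and the
scalar function `f y = ⟪v y, g⟫` is `C^n` with `|L| ≤ n`, then the iterated partial
derivative of `f` along `L` is `y ↦ ⟪W y, g⟫`. -/
lemma pdl_inner {Ω : Type*} [MeasurableSpace Ω] {μ : Measure Ω} {d : ℕ}
    (v : (Fin d → ℝ) → Lp ℝ 2 μ) (g : Lp ℝ 2 μ) (L : List (Fin d))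
    (W : (Fin d → ℝ) → Lp ℝ 2 μ) (hW : HasMSIterDeriv v L W)
    (f : (Fin d → ℝ) → ℝ) (hf : ∀ y, f y = inner ℝ (v y) g)
    (n : ℕ) (hsm : ContDiff ℝ n f) (hlen : L.length ≤ n) :
    partialDerivList L f = fun y => (inner ℝ (W y) g : ℝ) := by
  induction L generalizing W with
  | nil =>
    subst hW
    exact funext hf
  | cons r L ih =>
    obtain ⟨w', h1, h2⟩ := hW
    have hlen' : L.length ≤ n := le_trans (Nat.le_succ _) hlen
    have IH := ih w' h1 hlen'
    funext xx
    show fderiv ℝ (partialDerivList L f) xx (Pi.single r 1) = inner ℝ (W xx) g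
    set φ := partialDerivList L f with hφ
    have hdiff : DifferentiableAt ℝ φ xx := by
      have := contDiff_pdl L f n 1 hsm (by simpa using hlen)
      exact (this.differentiable (by norm_num)).differentiableAt
    have hline : HasDerivAt (fun t : ℝ => xx + t • (Pi.single r 1 : Fin d → ℝ))
        (Pi.single r 1 : Fin d → ℝ) 0 := by
      simpa using ((hasDerivAt_id (0:ℝ)).smul_const (Pi.single r 1 : Fin d → ℝ)).const_add xx
    have hψ : HasDerivAt (fun t : ℝ => φ (xx + t • (Pi.single r 1 : Fin d → ℝ)))
        (fderiv ℝ φ xx (Pi.single r 1)) 0 := by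
      have hd2 : HasFDerivAt φ (fderiv ℝ φ xx) (xx + (0:ℝ) • (Pi.single r 1 : Fin d → ℝ)) := by
        simpa using hdiff.hasFDerivAt
      exact (hd2.comp_hasDerivAt 0 hline)
    have hT1 : Tendsto (fun h : ℝ => h⁻¹ * (φ (xx + h • (Pi.single r 1 : Fin d → ℝ)) - φ xx))
        (nhdsWithin 0 {0}ᶜ) (nhds (fderiv ℝ φ xx (Pi.single r 1))) := by
      have := hasDerivAt_iff_tendsto_slope.mp hψ
      refine this.congr (fun h => ?_)
      simp [slope, smul_eq_mul]
    have hT2 : Tendsto (fun h : ℝ => h⁻¹ * (φ (xx + h • (Pi.single r 1 : Fin d → ℝ)) - φ xx))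
        (nhdsWithin 0 {0}ᶜ) (nhds (inner ℝ (W xx) g)) := by
      have hc : Continuous (fun z : Lp ℝ 2 μ => (inner ℝ z g : ℝ)) :=
        continuous_id.inner continuous_const
      have := (hc.tendsto (W xx)).comp (h2 xx)
      refine this.congr (fun h => ?_)
      simp only [Function.comp, IH]
      rw [inner_smul_left, inner_sub_left]
      simp [RCLike.conj_to_real]
    exact tendsto_nhds_unique hT1 hT2

theorem covariance_of_operator_observations
    {Ω : Type*} [MeasurableSpace Ω] {μ : Measure Ω} [IsProbabilityMeasure μ]
    {d : ℕ}
    (u : (Fin d → ℝ) → Lp ℝ 2 μ)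
    (hmean : ∀ x : Fin d → ℝ, ∫ ω, (u x : Ω → ℝ) ω ∂μ = 0)
    (c : (Fin d → ℝ) → (Fin d → ℝ) → ℝ)
    (hc : ∀ x x' : Fin d → ℝ, c x x' = ∫ ω, (u x : Ω → ℝ) ω * (u x' : Ω → ℝ) ω ∂μ)
    (k : ℕ) (hk : 1 ≤ k)
    (hC2k : ContDiff ℝ (2 * k) (Function.uncurry c))
    (Lcoef Bcoef : (Fin d → Fin (k + 1)) → (Fin d → ℝ) → ℝ)
    (Lst : (Fin d → Fin (k + 1)) → List (Fin d))
    (hLst : ∀ α : Fin d → Fin (k + 1), ∀ r, (Lst α).count r = (α r : ℕ))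
    (w : (Fin d → Fin (k + 1)) → (Fin d → ℝ) → Lp ℝ 2 μ)
    (hw : ∀ α : Fin d → Fin (k + 1), (∑ r, (α r : ℕ)) ≤ k →
      HasMSIterDeriv u (Lst α) (w α))
    (x x' : Fin d → ℝ) :
    ∫ ω, ((∑ α ∈ Finset.univ.filter (fun α : Fin d → Fin (k + 1) => (∑ r, (α r : ℕ)) ≤ k),
            Lcoef α x • w α x : Lp ℝ 2 μ) : Ω → ℝ) ω *
          ((∑ β ∈ Finset.univ.filter (fun β : Fin d → Fin (k + 1) => (∑ r, (β r : ℕ)) ≤ k - 1),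
            Bcoef β x' • w β x' : Lp ℝ 2 μ) : Ω → ℝ) ω ∂μ
      = ∑ α ∈ Finset.univ.filter (fun α : Fin d → Fin (k + 1) => (∑ r, (α r : ℕ)) ≤ k),
          ∑ β ∈ Finset.univ.filter (fun β : Fin d → Fin (k + 1) => (∑ r, (β r : ℕ)) ≤ k - 1),
            Lcoef α x * Bcoef β x' *
              partialDerivList (Lst α) (fun y => partialDerivList (Lst β) (fun z => c y z) x') x := by
  -- lengths of the lists
  have hlen : ∀ α : Fin d → Fin (k + 1), (Lst α).length = ∑ r, (α r : ℕ) := by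
    intro α
    rw [← sum_count_eq_length]
    exact Finset.sum_congr rfl (fun r _ => hLst α r)
  -- the per-term identity
  have key : ∀ α ∈ Finset.univ.filter (fun α : Fin d → Fin (k + 1) => (∑ r, (α r : ℕ)) ≤ k),
      ∀ β ∈ Finset.univ.filter (fun β : Fin d → Fin (k + 1) => (∑ r, (β r : ℕ)) ≤ k - 1),
      (inner ℝ (w α x) (w β x') : ℝ)
        = partialDerivList (Lst α) (fun y => partialDerivList (Lst β) (fun z => c y z) x') x := by
    intro α hα β hβ
    rw [Finset.mem_filter] at hα hβ
    have hαk : (∑ r, (α r : ℕ)) ≤ k := hα.2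
    have hβk : (∑ r, (β r : ℕ)) ≤ k - 1 := hβ.2
    have hβk' : (∑ r, (β r : ℕ)) ≤ k := le_trans hβk (Nat.sub_le _ _)
    -- inner partial derivatives: differentiate c in the second variable
    have hGfun : (fun y => partialDerivList (Lst β) (fun z => c y z) x')
        = fun y => (inner ℝ (u y) (w β x') : ℝ) := by
      funext y
      have hf : ∀ z, c y z = inner ℝ (u z) (u y) := by
        intro z
        rw [hc y z, integral_mul_eq_inner, real_inner_comm]
      have hsm : ContDiff ℝ (2 * k : ℕ) (fun z => c y z) :=
        hC2k.comp (contDiff_const.prodMk contDiff_id)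
      have hl : (Lst β).length ≤ 2 * k := by
        rw [hlen β]; omega
      have := pdl_inner u (u y) (Lst β) (w β) (hw β hβk') (fun z => c y z) hf (2 * k) hsm hl
      calc partialDerivList (Lst β) (fun z => c y z) x'
          = inner ℝ (w β x') (u y) := by rw [this]
        _ = inner ℝ (u y) (w β x') := real_inner_comm _ _
    -- smoothness of the inner derivative as a function of the first variable
    have hGsm : ContDiff ℝ (k : ℕ) (fun y => partialDerivList (Lst β) (fun z => c y z) x') := by
      have hjoint := contDiff_pdl_snd (Lst β) c (2 * k) k hC2k (by rw [hlen β]; omega)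
      have := hjoint.comp (f := fun y : Fin d → ℝ => (y, x'))
        (contDiff_id.prodMk contDiff_const)
      exact this
    -- outer derivatives
    have hl2 : (Lst α).length ≤ k := by rw [hlen α]; exact hαk
    have houter := pdl_inner u (w β x') (Lst α) (w α) (hw α hαk)
      (fun y => partialDerivList (Lst β) (fun z => c y z) x')
      (fun y => congrFun hGfun y) k hGsm hl2
    rw [houter]
  -- expand the bilinear form
  rw [integral_mul_eq_inner]
  rw [sum_inner]
  refine Finset.sum_congr rfl (fun α hα => ?_)
  rw [inner_sum]
  refine Finset.sum_congr rfl (fun β hβ => ?_)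
  rw [real_inner_smul_left, real_inner_smul_right, ← key α hα β hβ]
  ring
end
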